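/- Fix n > 3. For each i : Fin n let T_i be the map on states (Fin n → ZMod 2) that replaces y_i by y_i + 1 when y_{i−1} = y_{i+1} = 0 and leaves the state unchanged otherwise (the Wolfram rule 201 local function at i). Then T_i maps N_A bijectively onto itself, the number of states y ∈ N_A with T_i(y) ≠ y equals 2·fib(n−1), and the sign of the permutation of N_A induced by T_i equals (−1)^{fib(n−1)}. In particular, when fib(n−1) is even, every element of the subgroup LG_n of the permutation group of N_A generated by these restrictions is an even permutation. -/

import Mathlib

open Finset
open Fin.NatCast Fin.CommRing

private def Rr (a b : ZMod 2) : Prop := a = 0 ∨ b = 0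

private instance : DecidableRel Rr := fun a b => inferInstanceAs (Decidable (_ ∨ _))

/-- pairs of finsets: good lists with head ≠ 1 (incl. empty), good lists with head = 1 -/
private def ZO : ℕ → Finset (List (ZMod 2)) × Finset (List (ZMod 2))
  | 0 => ({[]}, ∅)
  | m+1 => (((ZO m).1 ∪ (ZO m).2).image (List.cons 0), (ZO m).1.image (List.cons 1))

private lemma zmod2_cases : ∀ b : ZMod 2, b = 0 ∨ b = 1 := by decide

private lemma head_cases (l : List (ZMod 2)) : (∀ b ∈ l.head?, b = 0) ∨ l.head? = some 1 := by
  cases h : l.head? with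
  | none => exact Or.inl (by simp)
  | some b =>
    rcases zmod2_cases b with hb | hb
    · exact Or.inl (by simp [hb])
    · exact Or.inr (by rw [hb])

private lemma mem_ZO : ∀ (m : ℕ) (l : List (ZMod 2)),
    (l ∈ (ZO m).1 ↔ l.length = m ∧ l.IsChain Rr ∧ ∀ b ∈ l.head?, b = 0) ∧
    (l ∈ (ZO m).2 ↔ l.length = m ∧ l.IsChain Rr ∧ l.head? = some 1) := by
  intro m
  induction m with
  | zero =>
    intro l
    constructor
    · simp only [ZO, Finset.mem_singleton]
      constructor
      · rintro rfl; simp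
      · rintro ⟨h, -, -⟩; exact List.length_eq_zero_iff.mp h
    · simp only [ZO, Finset.notMem_empty, false_iff, not_and]
      rintro h; simp [List.length_eq_zero_iff.mp h]
  | succ m ih =>
    intro l
    constructor
    · simp only [ZO, Finset.mem_image, Finset.mem_union]
      constructor
      · rintro ⟨l', hl', rfl⟩
        have h1 := ((ih l').1).mp; have h2 := ((ih l').2).mp
        rcases hl' with h | h
        · obtain ⟨hlen, hch, -⟩ := h1 h
          refine ⟨by simp [hlen], ?_, by simp⟩
          rw [List.isChain_cons]
          exact ⟨fun y _ => Or.inl rfl, hch⟩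
        · obtain ⟨hlen, hch, -⟩ := h2 h
          refine ⟨by simp [hlen], ?_, by simp⟩
          rw [List.isChain_cons]
          exact ⟨fun y _ => Or.inl rfl, hch⟩
      · rintro ⟨hlen, hch, hh⟩
        match l with
        | [] => simp at hlen
        | a :: l' =>
          have ha : a = 0 := hh a rfl
          subst ha
          refine ⟨l', ?_, rfl⟩
          have hch' : l'.IsChain Rr := (List.isChain_cons.mp hch).2
          have hlen' : l'.length = m := by simpa using hlen
          by_cases hhd : l'.head? = some 1
          · exact Or.inr ((ih l').2.mpr ⟨hlen', hch', hhd⟩)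
          · refine Or.inl ((ih l').1.mpr ⟨hlen', hch', ?_⟩)
            intro b hb
            rcases zmod2_cases b with h | h
            · exact h
            · exact absurd (h ▸ hb) hhd
    · simp only [ZO, Finset.mem_image]
      constructor
      · rintro ⟨l', hl', rfl⟩
        obtain ⟨hlen, hch, hh⟩ := (ih l').1.mp hl'
        refine ⟨by simp [hlen], ?_, rfl⟩
        rw [List.isChain_cons]
        refine ⟨fun y hy => Or.inr (hh y hy), hch⟩
      · rintro ⟨hlen, hch, hh⟩
        match l with
        | [] => simp at hh
        | a :: l' =>
          have ha : a = 1 := by simpa using hh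
          subst ha
          refine ⟨l', ?_, rfl⟩
          have h1 := List.isChain_cons.mp hch
          refine (ih l').1.mpr ⟨by simpa using hlen, h1.2, ?_⟩
          intro b hb
          rcases h1.1 b hb with h | h
          · exact absurd h (by decide)
          · exact h

private lemma card_ZO : ∀ m : ℕ, (ZO m).1.card = Nat.fib (m+1) ∧ (ZO m).2.card = Nat.fib m := by
  intro m
  induction m with
  | zero => simp [ZO]
  | succ m ih =>
    have hdisj : Disjoint (ZO m).1 (ZO m).2 := by
      rw [Finset.disjoint_left]
      intro l h1 h2
      obtain ⟨-, -, hh⟩ := (mem_ZO m l).1.mp h1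
      obtain ⟨-, -, hh'⟩ := (mem_ZO m l).2.mp h2
      exact absurd (hh 1 hh') (by decide)
    have hinj0 : Function.Injective (List.cons (0 : ZMod 2)) := fun a b h => (List.cons.injEq _ _ _ _).mp h |>.2
    have hinj1 : Function.Injective (List.cons (1 : ZMod 2)) := fun a b h => (List.cons.injEq _ _ _ _).mp h |>.2
    constructor
    · show (((ZO m).1 ∪ (ZO m).2).image (List.cons 0)).card = _
      rw [Finset.card_image_of_injective _ hinj0, Finset.card_union_of_disjoint hdisj, ih.1, ih.2,
        Nat.add_comm]
      exact (Nat.fib_add_two).symm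
    · show ((ZO m).1.image (List.cons 1)).card = _
      rw [Finset.card_image_of_injective _ hinj1, ih.1]

private lemma ofFn_getD (m : ℕ) (l : List (ZMod 2)) (hlen : l.length = m) :
    List.ofFn (fun k : Fin m => l.getD k 0) = l := by
  apply List.ext_getElem (by simp [hlen])
  intro j h1 h2
  rw [List.getElem_ofFn]
  show l.getD _ 0 = _
  rw [List.getD_eq_getElem?_getD, List.getElem?_eq_getElem h2]
  simp

/-- good functions on a path of length m -/
private def GoodF (m : ℕ) : Finset (Fin m → ZMod 2) :=
  Finset.univ.filter fun f => (List.ofFn f).IsChain Rr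

private lemma card_GoodF (m : ℕ) : (GoodF m).card = Nat.fib (m + 2) := by
  have : (GoodF m).card = ((ZO m).1 ∪ (ZO m).2).card := by
    apply Finset.card_nbij' (fun f => List.ofFn f) (fun l => fun k : Fin m => l.getD k 0)
    · intro f hf
      simp only [Finset.mem_coe, GoodF, Finset.mem_filter] at hf
      rw [Finset.mem_coe, Finset.mem_union, (mem_ZO m _).1, (mem_ZO m _).2]
      rcases head_cases (List.ofFn f) with h | h
      · exact Or.inl ⟨by simp, hf.2, h⟩
      · exact Or.inr ⟨by simp, hf.2, h⟩
    · intro l hl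
      rw [Finset.mem_coe, Finset.mem_union, (mem_ZO m _).1, (mem_ZO m _).2] at hl
      have hlen : l.length = m := by rcases hl with h | h <;> exact h.1
      have hch : l.IsChain Rr := by rcases hl with h | h <;> exact h.2.1
      simp only [Finset.mem_coe, GoodF, Finset.mem_filter, Finset.mem_univ, true_and]
      rwa [ofFn_getD m l hlen]
    · intro f hf
      funext k
      show (List.ofFn f).getD k 0 = f k
      rw [List.getD_eq_getElem?_getD, List.getElem?_eq_getElem (by simp [k.isLt])]
      simp
    · intro l hl
      rw [Finset.mem_coe, Finset.mem_union, (mem_ZO m _).1, (mem_ZO m _).2] at hl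
      have hlen : l.length = m := by rcases hl with h | h <;> exact h.1
      exact ofFn_getD m l hlen
  rw [this, Finset.card_union_of_disjoint, (card_ZO m).1, (card_ZO m).2, Nat.add_comm, Nat.fib_add_two]
  rw [Finset.disjoint_left]
  intro l h1 h2
  obtain ⟨-, -, hh⟩ := (mem_ZO m l).1.mp h1
  obtain ⟨-, -, hh'⟩ := (mem_ZO m l).2.mp h2
  exact absurd (hh 1 hh') (by decide)

private lemma mem_GoodF {m : ℕ} (f : Fin m → ZMod 2) :
    f ∈ GoodF m ↔ ∀ (k : ℕ) (h : k + 1 < m), Rr (f ⟨k, by omega⟩) (f ⟨k+1, h⟩) := by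
  simp only [GoodF, Finset.mem_filter, Finset.mem_univ, true_and, List.isChain_iff_getElem]
  constructor
  · intro h k hk
    have := h k (by simp only [List.length_ofFn]; omega)
    simpa [List.get_ofFn] using this
  · intro h k hk
    simp only [List.length_ofFn] at hk
    have := h k (by omega)
    simpa [List.get_ofFn] using this

private lemma zmod_R (a b : ZMod 2) (h : ¬(a = 1 ∧ b = 1)) : Rr a b := by
  revert h; revert a b; decide

private lemma zmod_R' (a b : ZMod 2) (h : Rr a b) : ¬(a = 1 ∧ b = 1) := by
  revert h; revert a b; decide

private lemma cast_val_lt {n : ℕ} [NeZero n] {m : ℕ} (h : m < n) :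
    ((m : Fin n)).val = m := by
  rw [Fin.val_natCast, Nat.mod_eq_of_lt h]

private lemma cast_inj_lt {n : ℕ} [NeZero n] {a b : ℕ} (ha : a < n) (hb : b < n) :
    ((a : Fin n) = (b : Fin n)) ↔ a = b := by
  rw [Fin.ext_iff, cast_val_lt ha, cast_val_lt hb]

private lemma cast_nsub_one {n : ℕ} [NeZero n] : ((n - 1 : ℕ) : Fin n) = -1 := by
  have h : ((n - 1 : ℕ) : Fin n) + ((1 : ℕ) : Fin n) = 0 := by
    rw [← Nat.cast_add, Nat.sub_add_cancel (Nat.one_le_iff_ne_zero.mpr (NeZero.ne n)),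
      Fin.natCast_self]
  rw [Nat.cast_one] at h
  exact eq_neg_of_add_eq_zero_left h

private def fro {n : ℕ} [NeZero n] (i : Fin n) (p : ZMod 2 × (Fin (n-3) → ZMod 2))
    (j : Fin n) : ZMod 2 :=
  if j = i then p.1 else if j = i + 1 ∨ j = i - 1 then 0
  else if h : ((j - i).val - 2) < n - 3 then p.2 ⟨(j - i).val - 2, h⟩ else 0

private lemma fro_eval {n : ℕ} [NeZero n] (hn : 3 < n) (i : Fin n)
    (p : ZMod 2 × (Fin (n-3) → ZMod 2)) (m : ℕ) (hm : m < n) :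
    fro i p (i + (m : Fin n)) =
      if m = 0 then p.1 else if m = 1 ∨ m = n - 1 then 0
      else if h : m - 2 < n - 3 then p.2 ⟨m - 2, h⟩ else 0 := by
  have hsub : (i + (m : Fin n)) - i = (m : Fin n) := by ring
  have h0 : (i + (m : Fin n) = i) ↔ m = 0 := by
    rw [add_eq_left, show (0 : Fin n) = ((0:ℕ) : Fin n) from rfl,
      cast_inj_lt hm (by omega)]
  have h1 : (i + (m : Fin n) = i + 1) ↔ m = 1 := by
    rw [add_right_inj, show (1 : Fin n) = ((1:ℕ) : Fin n) by rw [Nat.cast_one],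
      cast_inj_lt hm (by omega)]
  have h2 : (i + (m : Fin n) = i - 1) ↔ m = n - 1 := by
    rw [sub_eq_add_neg, ← cast_nsub_one, add_right_inj, cast_inj_lt hm (by omega)]
  simp only [fro, hsub, cast_val_lt hm, h0, h1, h2]

private lemma count_main {n : ℕ} [NeZero n] (hn : 3 < n) (i : Fin n)
    (NA : Finset (Fin n → ZMod 2))
    (hNA : ∀ y : Fin n → ZMod 2,
      y ∈ NA ↔ ∀ j : Fin n, ¬(y j = 1 ∧ y (j + 1) = 1)) :
    (NA.filter fun y => y (i-1) = 0 ∧ y (i+1) = 0).card = 2 * Nat.fib (n-1) := by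
  have key : ∀ j : Fin n, ∃ m : ℕ, m < n ∧ j = i + (m : Fin n) := by
    intro j
    exact ⟨(j - i).val, (j - i).isLt, by rw [Fin.cast_val_eq_self, add_comm, sub_add_cancel]⟩
  have hcast_succ : ∀ a : ℕ, ((a : Fin n) + 1) = ((a + 1 : ℕ) : Fin n) := by
    intro a; rw [Nat.cast_add, Nat.cast_one]
  have him1eq : i - 1 = i + ((n - 1 : ℕ) : Fin n) := by
    rw [cast_nsub_one, ← sub_eq_add_neg]
  have hi1eq : i + 1 = i + ((1 : ℕ) : Fin n) := by rw [Nat.cast_one]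
  have hcard : (NA.filter fun y => y (i-1) = 0 ∧ y (i+1) = 0).card
      = ((Finset.univ : Finset (ZMod 2)) ×ˢ GoodF (n-3)).card := by
    apply Finset.card_nbij'
      (fun y => (y i, fun k : Fin (n-3) => y (i + (((k : ℕ) + 2 : ℕ) : Fin n))))
      (fro i)
    · -- forward maps to target
      intro y hy
      rw [Finset.mem_coe, Finset.mem_filter] at hy
      obtain ⟨hyNA, hm1, hp1⟩ := hy
      rw [Finset.mem_coe, Finset.mem_product]
      refine ⟨Finset.mem_univ _, ?_⟩
      rw [mem_GoodF]
      intro k hk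
      apply zmod_R
      have := (hNA y).mp hyNA (i + (((k : ℕ) + 2 : ℕ) : Fin n))
      rwa [add_assoc, hcast_succ, show k + 2 + 1 = k + 1 + 2 by omega] at this
    · -- fro maps to source
      intro p hp
      rw [Finset.mem_coe, Finset.mem_product, mem_GoodF] at hp
      rw [Finset.mem_coe, Finset.mem_filter]
      have hi1 : fro i p (i + 1) = 0 := by
        rw [hi1eq, fro_eval hn i p 1 (by omega)]
        simp
      have him1 : fro i p (i - 1) = 0 := by
        rw [him1eq, fro_eval hn i p (n-1) (by omega)]
        simp [show ¬(n - 1 = 0) by omega]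
      refine ⟨?_, him1, hi1⟩
      rw [hNA]
      intro j
      obtain ⟨m, hmn, rfl⟩ := key j
      have hadd1 : i + (m : Fin n) + 1 = i + ((m + 1 : ℕ) : Fin n) := by
        rw [add_assoc, hcast_succ]
      by_cases hm0 : m = 0
      · have hv : fro i p (i + (m : Fin n) + 1) = 0 := by
          rw [hadd1, hm0, fro_eval hn i p (0+1) (by omega)]
          simp
        rw [hv]
        exact fun h => absurd h.2 (by decide)
      by_cases hm1' : m = 1
      · have hv : fro i p (i + (m : Fin n)) = 0 := by
          rw [hm1', fro_eval hn i p 1 (by omega)]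
          simp
        rw [hv]
        exact fun h => absurd h.1 (by decide)
      by_cases hmlast : m = n - 1
      · have hv : fro i p (i + (m : Fin n)) = 0 := by
          rw [hmlast, fro_eval hn i p (n-1) (by omega)]
          simp [show ¬(n - 1 = 0) by omega]
        rw [hv]
        exact fun h => absurd h.1 (by decide)
      by_cases hm2last : m = n - 2
      · have hv : fro i p (i + (m : Fin n) + 1) = 0 := by
          rw [hadd1, hm2last, show (n-2)+1 = n-1 by omega, fro_eval hn i p (n-1) (by omega)]
          simp [show ¬(n - 1 = 0) by omega]
        rw [hv]
        exact fun h => absurd h.2 (by decide)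
      · -- middle: 2 ≤ m ≤ n - 3
        rw [hadd1, fro_eval hn i p m hmn, fro_eval hn i p (m+1) (by omega)]
        rw [if_neg hm0, if_neg (by omega : ¬(m = 1 ∨ m = n-1)),
          dif_pos (by omega : m - 2 < n - 3),
          if_neg (by omega : ¬(m+1) = 0), if_neg (by omega : ¬(m+1 = 1 ∨ m+1 = n-1)),
          dif_pos (by omega : m + 1 - 2 < n - 3)]
        apply zmod_R'
        have := hp.2 (m - 2) (by omega)
        convert this using 3 <;> omega
    · -- left inverse
      intro y hy
      rw [Finset.mem_coe, Finset.mem_filter] at hy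
      obtain ⟨hyNA, hm1, hp1⟩ := hy
      funext j
      obtain ⟨m, hmn, rfl⟩ := key j
      rw [fro_eval hn i _ m hmn]
      by_cases hm0 : m = 0
      · rw [if_pos hm0, hm0]
        show y i = _
        rw [Nat.cast_zero, add_zero]
      rw [if_neg hm0]
      by_cases hm1' : m = 1
      · rw [if_pos (Or.inl hm1'), hm1', ← hi1eq]
        exact hp1.symm
      by_cases hmlast : m = n - 1
      · rw [if_pos (Or.inr hmlast), hmlast, ← him1eq]
        exact hm1.symm
      · rw [if_neg (by tauto : ¬(m = 1 ∨ m = n - 1)), dif_pos (by omega : m - 2 < n - 3)]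
        show y (i + (((m - 2 : ℕ) + 2 : ℕ) : Fin n)) = _
        rw [show (m - 2) + 2 = m by omega]
    · -- right inverse
      intro p hp
      refine Prod.ext ?_ (funext fun k => ?_)
      · show fro i p i = p.1
        simp [fro]
      · show fro i p (i + (((k : ℕ) + 2 : ℕ) : Fin n)) = p.2 k
        rw [fro_eval hn i p ((k : ℕ) + 2) (by have := k.isLt; omega)]
        rw [if_neg (by omega), if_neg (by have := k.isLt; omega),
          dif_pos (by have := k.isLt; omega : (k : ℕ) + 2 - 2 < n - 3)]
        exact congrArg p.2 (Fin.ext (by simp))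
  rw [hcard]
  clear hcard
  rw [Finset.card_product]
  rw [card_GoodF]
  have h32 : n - 3 + 2 = n - 1 := by omega
  rw [h32]
  simp only [Finset.card_univ, ZMod.card]

private lemma zmod_add11 : ∀ a : ZMod 2, a + 1 + 1 = a := by decide
private lemma zmod_succ_ne : ∀ a : ZMod 2, ¬ a + 1 = a := by decide

private def Tfun {n : ℕ} [NeZero n] (i : Fin n) (y : Fin n → ZMod 2) : Fin n → ZMod 2 :=
  if y (i - 1) = 0 ∧ y (i + 1) = 0 then Function.update y i (y i + 1) else y

private lemma one_ne_zero_fin {n : ℕ} [NeZero n] (hn : 1 < n) : (1 : Fin n) ≠ 0 := by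
  have : ((1:ℕ) : Fin n) ≠ ((0:ℕ) : Fin n) := by
    rw [Ne, cast_inj_lt (by omega) (by omega)]; omega
  simpa using this

private lemma fsucc_ne_self {n : ℕ} [NeZero n] (hn : 1 < n) (i : Fin n) : i + 1 ≠ i := by
  rw [Ne, add_eq_left]
  exact one_ne_zero_fin hn

private lemma fpred_ne_self {n : ℕ} [NeZero n] (hn : 1 < n) (i : Fin n) : i - 1 ≠ i := by
  rw [Ne, sub_eq_add_neg, add_eq_left, neg_eq_zero]
  exact one_ne_zero_fin hn

private lemma Tfun_nbrs {n : ℕ} [NeZero n] (hn : 1 < n) (i : Fin n) (y : Fin n → ZMod 2) :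
    Tfun i y (i - 1) = y (i - 1) ∧ Tfun i y (i + 1) = y (i + 1) := by
  rw [Tfun]
  split
  · rw [Function.update_of_ne (fpred_ne_self hn i), Function.update_of_ne (fsucc_ne_self hn i)]
    exact ⟨rfl, rfl⟩
  · exact ⟨rfl, rfl⟩

private lemma Tfun_invol {n : ℕ} [NeZero n] (hn : 1 < n) (i : Fin n) (y : Fin n → ZMod 2) :
    Tfun i (Tfun i y) = y := by
  obtain ⟨h1, h2⟩ := Tfun_nbrs hn i y
  by_cases hc : y (i - 1) = 0 ∧ y (i + 1) = 0
  · have hc' : Tfun i y (i - 1) = 0 ∧ Tfun i y (i + 1) = 0 := by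
      rw [h1, h2]; exact hc
    rw [Tfun, if_pos hc']
    have hTy : Tfun i y = Function.update y i (y i + 1) := by rw [Tfun, if_pos hc]
    rw [hTy]
    funext j
    by_cases hj : j = i
    · subst hj
      simp only [Function.update_self]
      exact zmod_add11 (y j)
    · simp only [Function.update_of_ne hj]
  · have hTy : Tfun i y = y := by rw [Tfun, if_neg hc]
    rw [hTy, Tfun, if_neg hc]

private lemma Tfun_mem {n : ℕ} [NeZero n] (hn : 1 < n) (i : Fin n) (y : Fin n → ZMod 2)
    (hy : ∀ j : Fin n, ¬(y j = 1 ∧ y (j + 1) = 1)) :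
    ∀ j : Fin n, ¬(Tfun i y j = 1 ∧ Tfun i y (j + 1) = 1) := by
  intro j
  by_cases hc : y (i - 1) = 0 ∧ y (i + 1) = 0
  · have hTy : Tfun i y = Function.update y i (y i + 1) := by rw [Tfun, if_pos hc]
    rw [hTy]
    by_cases hj : j = i
    · subst hj
      rw [Function.update_of_ne (fsucc_ne_self hn j)]
      intro h
      rw [hc.2] at h
      exact absurd h.2 (by decide)
    by_cases hj1 : j + 1 = i
    · have hji : j = i - 1 := by rw [eq_sub_iff_add_eq]; exact hj1
      rw [Function.update_of_ne hj]
      intro h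
      rw [hji, hc.1] at h
      exact absurd h.1 (by decide)
    · rw [Function.update_of_ne hj, Function.update_of_ne hj1]
      exact hy j
  · have hTy : Tfun i y = y := by rw [Tfun, if_neg hc]
    rw [hTy]
    exact hy j

private lemma Tfun_ne_iff {n : ℕ} [NeZero n] (i : Fin n) (y : Fin n → ZMod 2) :
    Tfun i y ≠ y ↔ (y (i - 1) = 0 ∧ y (i + 1) = 0) := by
  constructor
  · intro h
    by_contra hc
    exact h (by rw [Tfun, if_neg hc])
  · intro hc h
    have := congrFun h i
    rw [Tfun, if_pos hc, Function.update_self] at this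
    exact zmod_succ_ne (y i) this



/-- For Wolfram rule 201 (flip `y i` when both neighbors are 0),
each local function maps `N_A` bijectively to itself, moves exactly
`2 * fib (n-1)` states of `N_A`, and the induced permutation of `N_A` has sign
`(-1)^(fib (n-1))`; hence when `fib (n-1)` is even, every element of the group
generated by these restrictions is an even permutation. -/
theorem stmt_11 {n : ℕ} [NeZero n] (hn : 3 < n)
    (T : Fin n → (Fin n → ZMod 2) → (Fin n → ZMod 2))
    (hT : ∀ (i : Fin n) (y : Fin n → ZMod 2),
      T i y = if y (i - 1) = 0 ∧ y (i + 1) = 0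
        then Function.update y i (y i + 1) else y)
    (NA : Finset (Fin n → ZMod 2))
    (hNA : ∀ y : Fin n → ZMod 2,
      y ∈ NA ↔ ∀ i : Fin n, ¬(y i = 1 ∧ y (i + 1) = 1)) :
    (∀ i : Fin n, Set.BijOn (T i) ↑NA ↑NA) ∧
    (∀ i : Fin n, (NA.filter fun y => T i y ≠ y).card = 2 * Nat.fib (n - 1)) ∧
    (∀ (i : Fin n) (e : Equiv.Perm {y // y ∈ NA}),
      (∀ y : {y // y ∈ NA}, (e y : Fin n → ZMod 2) = T i (y : Fin n → ZMod 2)) →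
      Equiv.Perm.sign e = (-1) ^ Nat.fib (n - 1)) ∧
    (Even (Nat.fib (n - 1)) →
      ∀ g ∈ Subgroup.closure {e : Equiv.Perm {y // y ∈ NA} |
          ∃ i : Fin n, ∀ y : {y // y ∈ NA},
            (e y : Fin n → ZMod 2) = T i (y : Fin n → ZMod 2)},
        Equiv.Perm.sign g = 1) := by
  have h1n : 1 < n := by omega
  have hTeq : ∀ i, T i = Tfun i := fun i => funext fun y => by rw [hT i y]; rfl
  have hmaps : ∀ i : Fin n, Set.MapsTo (T i) ↑NA ↑NA := by
    intro i y hy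
    rw [Finset.mem_coe, hNA] at hy ⊢
    rw [hTeq]
    exact Tfun_mem h1n i y hy
  have hinvol : ∀ (i : Fin n) y, T i (T i y) = y := by
    intro i y
    rw [hTeq]
    exact Tfun_invol h1n i y
  have hfilter : ∀ i : Fin n,
      (NA.filter fun y => T i y ≠ y).card = 2 * Nat.fib (n - 1) := by
    intro i
    have heq : (NA.filter fun y => T i y ≠ y)
        = NA.filter fun y => y (i - 1) = 0 ∧ y (i + 1) = 0 := by
      apply Finset.filter_congr
      intro y _
      rw [hTeq]
      exact Tfun_ne_iff i y
    rw [heq]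
    exact count_main hn i NA hNA
  have hsign : ∀ (i : Fin n) (e : Equiv.Perm {y // y ∈ NA}),
      (∀ y : {y // y ∈ NA}, (e y : Fin n → ZMod 2) = T i (y : Fin n → ZMod 2)) →
      Equiv.Perm.sign e = (-1) ^ Nat.fib (n - 1) := by
    intro i e he
    have hsq : e ^ 2 = 1 := by
      rw [pow_two]
      refine Equiv.ext fun y => Subtype.ext ?_
      simp only [Equiv.Perm.mul_apply, Equiv.Perm.one_apply]
      rw [he (e y), he y, hinvol]
    have horder : orderOf e ∣ 2 := orderOf_dvd_of_pow_eq_one hsq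
    have hsup : e.support.card = 2 * Nat.fib (n - 1) := by
      rw [← hfilter i]
      refine Finset.card_nbij (fun y => (y : Fin n → ZMod 2)) ?_ ?_ ?_
      · intro y hy
        rw [Finset.mem_coe, Equiv.Perm.mem_support] at hy
        rw [Finset.mem_coe, Finset.mem_filter]
        refine ⟨y.2, ?_⟩
        rw [← he y]
        exact fun h => hy (Subtype.ext h)
      · intro a _ b _ h
        exact Subtype.ext h
      · intro z hz
        rw [Finset.mem_coe, Finset.mem_filter] at hz
        refine ⟨⟨z, hz.1⟩, ?_, rfl⟩
        rw [Finset.mem_coe, Equiv.Perm.mem_support]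
        intro h
        apply hz.2
        rw [← he ⟨z, hz.1⟩, h]
    have hct : ∀ c ∈ e.cycleType, c = 2 := by
      intro c hc
      have h2 : 2 ≤ c := Equiv.Perm.two_le_of_mem_cycleType hc
      have hdvd : c ∣ 2 := (Multiset.dvd_lcm hc).trans ((Equiv.Perm.lcm_cycleType e) ▸ horder)
      have := Nat.le_of_dvd (by norm_num) hdvd
      omega
    have hrep : e.cycleType = Multiset.replicate (Multiset.card e.cycleType) 2 :=
      Multiset.eq_replicate.mpr ⟨rfl, hct⟩
    have hsum : e.cycleType.sum = 2 * Multiset.card e.cycleType := by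
      conv_lhs => rw [hrep]
      rw [Multiset.sum_replicate, smul_eq_mul]
      ring
    have hcard : Multiset.card e.cycleType = Nat.fib (n - 1) := by
      have := Equiv.Perm.sum_cycleType e
      omega
    rw [Equiv.Perm.sign_of_cycleType, hsum, hcard]
    rw [show 2 * Nat.fib (n-1) + Nat.fib (n-1) = 2 * Nat.fib (n-1) + Nat.fib (n-1) from rfl]
    rw [pow_add, pow_mul]
    norm_num
  refine ⟨?_, hfilter, hsign, ?_⟩
  · intro i
    have hinv : Set.InvOn (T i) (T i) ↑NA ↑NA :=
      ⟨fun y _ => hinvol i y, fun y _ => hinvol i y⟩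
    exact hinv.bijOn (hmaps i) (hmaps i)
  · intro heven g hg
    have hle : Subgroup.closure {e : Equiv.Perm {y // y ∈ NA} |
          ∃ i : Fin n, ∀ y : {y // y ∈ NA},
            (e y : Fin n → ZMod 2) = T i (y : Fin n → ZMod 2)}
        ≤ (Equiv.Perm.sign (α := {y // y ∈ NA})).ker := by
      rw [Subgroup.closure_le]
      rintro e ⟨i, he⟩
      rw [SetLike.mem_coe, MonoidHom.mem_ker, hsign i e he]
      exact Even.neg_one_pow heven
    exact MonoidHom.mem_ker.mp (hle hg)
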